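/- If a DFA M satisfies the partial order condition, then the minimal DFA accepting L(M) also satisfies the partial order condition. -/

import Mathlib

/-- Extended transition function of a DFA. -/
def dfaEval {Q A : Type} (δ : Q → A → Q) (q : Q) (w : List A) : Q :=
  w.foldl δ q

/-- Two states are distinguishable if some string sends exactly one of them into `F`. -/
def Disting {Q A : Type} (δ : Q → A → Q) (F : Set Q) (q1 q2 : Q) : Prop :=
  ∃ z : List A, ¬ (dfaEval δ q1 z ∈ F ↔ dfaEval δ q2 z ∈ F)

/-- The partial order condition: there are no distinguishable states `q1 ≠ q2` and
nonempty strings `x, y` with `δ(q1,x) = δ(q2,x) = q2` and `δ(q2,y) = q1`. -/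
def POC {Q A : Type} (δ : Q → A → Q) (F : Set Q) : Prop :=
  ¬ ∃ (q1 q2 : Q) (x y : List A), q1 ≠ q2 ∧ Disting δ F q1 q2 ∧ x ≠ [] ∧ y ≠ [] ∧
      dfaEval δ q1 x = q2 ∧ dfaEval δ q2 x = q2 ∧ dfaEval δ q2 y = q1

lemma dfaEval_append {Q A : Type} (δ : Q → A → Q) (q : Q) (u v : List A) :
    dfaEval δ q (u ++ v) = dfaEval δ (dfaEval δ q u) v :=
  by simp [dfaEval]

lemma dfaEval_replicate {Q A : Type} (δ : Q → A → Q) (w : List A) (k : ℕ) (q : Q) :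
    dfaEval δ q (List.flatten (List.replicate k w)) = (fun p => dfaEval δ p w)^[k] q := by
  induction k generalizing q with
  | zero => rfl
  | succ k ih =>
      rw [List.replicate_succ, List.flatten_cons, dfaEval_append, Function.iterate_succ_apply]
      exact ih _

lemma join_replicate_succ' {A : Type} (w : List A) (t : ℕ) :
    List.flatten (List.replicate (t+1) w) = List.flatten (List.replicate t w) ++ w := by
  rw [List.replicate_succ']; simp

lemma exists_idem_iter {α : Type} [Finite α] (f : α → α) :
    ∃ k, 1 ≤ k ∧ ∀ a, f^[k] (f^[k] a) = f^[k] a := by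
  obtain ⟨i, j, hij, hfe⟩ := Finite.exists_ne_map_eq_of_infinite (fun n : ℕ => f^[n])
  wlog hlt : i < j generalizing i j
  · exact this j i hij.symm hfe.symm (by omega)
  set p := j - i with hp
  have hp1 : 1 ≤ p := by omega
  have step : ∀ s : ℕ, i ≤ s → f^[s + p] = f^[s] := by
    intro s hs
    have h1 : s + p = (s - i) + j := by omega
    have h2 : s = (s - i) + i := by omega
    rw [h1, Function.iterate_add, ← hfe, ← Function.iterate_add, ← h2]
  have key : ∀ s t : ℕ, f^[i + s + t * p] = f^[i + s] := by
    intro s t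
    induction t with
    | zero => simp
    | succ t ih =>
        have : i + s + (t + 1) * p = (i + s + t * p) + p := by ring
        rw [this, step _ (by omega), ih]
  refine ⟨(i + 1) * p, by nlinarith, fun a => ?_⟩
  have hik : i ≤ (i + 1) * p := by nlinarith
  have h2k : (i + 1) * p + (i + 1) * p = i + ((i + 1) * p - i) + (i + 1) * p := by omega
  have := key ((i + 1) * p - i) (i + 1)
  rw [← Function.iterate_add_apply, h2k, this]
  congr 1
  omega

/-- if a DFA `M` satisfies the partial order condition, then so does the
minimal DFA for `L(M)` — formalized as: any DFA accepting the same language in which all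
states are reachable and distinct states are distinguishable (i.e. any automaton
isomorphic to the minimal DFA) satisfies the partial order condition. -/
theorem minimal_dfa_preserves_partial_order {A : Type} (n m : ℕ)
    (δ : Fin n → A → Fin n) (q0 : Fin n) (F : Set (Fin n))
    (δ' : Fin m → A → Fin m) (q0' : Fin m) (F' : Set (Fin m))
    (hPOC : POC δ F)
    (hsame : ∀ w : List A, dfaEval δ q0 w ∈ F ↔ dfaEval δ' q0' w ∈ F')
    (hreach : ∀ q : Fin m, ∃ s : List A, dfaEval δ' q0' s = q)
    (hreduced : ∀ p q : Fin m, p ≠ q → Disting δ' F' p q) :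
    POC δ' F' := by
  rintro ⟨q1', q2', x, y, hne, hdist, hx, hy, h1, h2, h3⟩
  -- correspondence between states of the two automata
  set C : Fin n → Fin m → Prop :=
    fun q q' => ∃ s : List A, dfaEval δ q0 s = q ∧ dfaEval δ' q0' s = q' with hC
  have Cstep : ∀ (q : Fin n) (q' : Fin m) (w : List A),
      C q q' → C (dfaEval δ q w) (dfaEval δ' q' w) := by
    rintro q q' w ⟨s, hs1, hs2⟩
    exact ⟨s ++ w, by rw [dfaEval_append, hs1], by rw [dfaEval_append, hs2]⟩
  have Cmem : ∀ (q : Fin n) (q' : Fin m), C q q' →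
      ∀ z : List A, (dfaEval δ q z ∈ F ↔ dfaEval δ' q' z ∈ F') := by
    rintro q q' ⟨s, hs1, hs2⟩ z
    have := hsame (s ++ z)
    rwa [dfaEval_append, dfaEval_append, hs1, hs2] at this
  have Cdist : ∀ (p r : Fin n) (p' r' : Fin m), C p p' → C r r' →
      Disting δ' F' p' r' → Disting δ F p r := by
    rintro p r p' r' hp hr ⟨z, hz⟩
    refine ⟨z, fun h => hz ?_⟩
    rw [← Cmem p p' hp z, ← Cmem r r' hr z]
    exact h
  -- pull back q2'
  obtain ⟨s0, hs0⟩ := hreach q2'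
  set a : Fin n := dfaEval δ q0 s0 with ha
  have hCa : C a q2' := ⟨s0, rfl, hs0⟩
  -- idempotent power of the x-map on M
  set f : Fin n → Fin n := fun q => dfaEval δ q x with hf
  obtain ⟨k, hk1, hkid⟩ := exists_idem_iter f
  set X : List A := List.flatten (List.replicate k x) with hX
  have hXne : X ≠ [] := by
    obtain ⟨k', rfl⟩ : ∃ k', k = k' + 1 := ⟨k - 1, by omega⟩
    rw [hX, List.replicate_succ, List.flatten_cons]
    intro h
    exact hx (List.append_eq_nil_iff.mp h).1
  have hevalX : ∀ q : Fin n, dfaEval δ q X = f^[k] q := fun q => dfaEval_replicate δ x k q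
  -- behaviour of X on M'
  set f' : Fin m → Fin m := fun q => dfaEval δ' q x with hf'
  have hf'q2 : f' q2' = q2' := h2
  have hX2 : dfaEval δ' q2' X = q2' := by
    rw [hX, dfaEval_replicate]
    exact Function.iterate_fixed hf'q2 k
  have hX1 : dfaEval δ' q1' X = q2' := by
    obtain ⟨k', rfl⟩ : ∃ k', k = k' + 1 := ⟨k - 1, by omega⟩
    rw [hX, dfaEval_replicate, Function.iterate_succ_apply]
    show f'^[k'] (f' q1') = q2'
    have : f' q1' = q2' := h1
    rw [this]
    exact Function.iterate_fixed hf'q2 k'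
  -- the combined word w0 = y ++ X and its map G on M
  set w0 : List A := y ++ X with hw0
  set G : Fin n → Fin n := fun q => dfaEval δ q w0 with hG
  have hGfix : ∀ q : Fin n, f^[k] (G q) = G q := by
    intro q
    have : G q = f^[k] (dfaEval δ q y) := by
      rw [hG]; simp only; rw [hw0, dfaEval_append, hevalX]
    rw [this, hkid]
  have hw0' : dfaEval δ' q2' w0 = q2' := by
    rw [hw0, dfaEval_append, h3, hX1]
  obtain ⟨l, hl1, hlid⟩ := exists_idem_iter G
  set c0 : Fin n := f^[k] a with hc0
  have hCc0 : C c0 q2' := by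
    have := Cstep a q2' X hCa
    rwa [hevalX, hX2] at this
  set p2 : Fin n := G^[l] c0 with hp2
  have hp2fix : G^[l] p2 = p2 := hlid c0
  have hp2e : f^[k] p2 = p2 := by
    obtain ⟨l', rfl⟩ : ∃ l', l = l' + 1 := ⟨l - 1, by omega⟩
    rw [hp2, Function.iterate_succ_apply']
    exact hGfix _
  have hCp2 : C p2 q2' := by
    have e1 : dfaEval δ c0 (List.flatten (List.replicate l w0)) = p2 := by
      rw [dfaEval_replicate]
    have e2 : dfaEval δ' q2' (List.flatten (List.replicate l w0)) = q2' := by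
      rw [dfaEval_replicate]; exact Function.iterate_fixed hw0' l
    have := Cstep c0 q2' (List.flatten (List.replicate l w0)) hCc0
    rwa [e1, e2] at this
  -- the return word Y
  set Y : List A := List.flatten (List.replicate (l - 1) w0) ++ y with hY
  have hYne : Y ≠ [] := by
    rw [hY]
    intro h
    exact hy (List.append_eq_nil_iff.mp h).2
  set p1 : Fin n := dfaEval δ p2 Y with hp1
  have hY' : dfaEval δ' q2' Y = q1' := by
    rw [hY, dfaEval_append, dfaEval_replicate, Function.iterate_fixed hw0' (l - 1), h3]
  have hCp1 : C p1 q1' := by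
    have := Cstep p2 q2' Y hCp2
    rwa [hY'] at this
  -- transitions in M
  have hp2X : dfaEval δ p2 X = p2 := by rw [hevalX, hp2e]
  have hp1X : dfaEval δ p1 X = p2 := by
    have hYX : Y ++ X = List.flatten (List.replicate l w0) := by
      rw [hY, List.append_assoc, ← hw0]
      have : l = (l - 1) + 1 := by omega
      rw [this, join_replicate_succ']
      simp
    rw [hp1, ← dfaEval_append, hYX, dfaEval_replicate, ← hG, hp2fix]
  -- distinguishability in M
  have hDist : Disting δ F p1 p2 := Cdist p1 p2 q1' q2' hCp1 hCp2 hdist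
  have hne12 : p1 ≠ p2 := by
    intro h
    obtain ⟨z, hz⟩ := hDist
    rw [h] at hz
    exact hz Iff.rfl
  exact hPOC ⟨p1, p2, X, Y, hne12, hDist, hXne, hYne, hp1X, hp2X, hp1.symm⟩
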